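/- With the notation of the previous statement (V integrable, ∫₀^∞ y^p|V(y)|dy < ∞, 0 < p < 1), for all ξ, η ∈ ℝ the functionals satisfy ‖l_ξ − l_η‖ ≤ C |ξ−η|^(p/2) (∫₀^∞ y^p |V(y)| dy)^(1/2), where C is an absolute constant (one may take C = 2). -/

import Mathlib

open MeasureTheory Set

private lemma sin_holder (a b q : ℝ) (hq0 : 0 ≤ q) (hq1 : q ≤ 1) :
    |Real.sin a - Real.sin b| ≤ 2 * |a - b| ^ q := by
  have habs : |Real.sin a - Real.sin b| ≤ |a - b| := by
    rw [Real.sin_sub_sin, abs_mul, abs_mul, abs_two]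
    have h1 : |Real.sin ((a - b)/2)| ≤ |(a - b)/2| := Real.abs_sin_le_abs
    have h2 : |Real.cos ((a + b)/2)| ≤ 1 := Real.abs_cos_le_one _
    have h3 : |(a - b)/2| = |a - b|/2 := by rw [abs_div]; norm_num
    nlinarith [abs_nonneg (Real.sin ((a - b)/2)), abs_nonneg (Real.cos ((a + b)/2)),
      abs_nonneg (a - b)]
  rcases le_or_gt 1 |a - b| with h | h
  · have h2 : |Real.sin a - Real.sin b| ≤ 2 := by
      have h1 := Real.abs_sin_le_one a
      have h2 := Real.abs_sin_le_one b
      calc |Real.sin a - Real.sin b| ≤ |Real.sin a| + |Real.sin b| := abs_sub _ _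
        _ ≤ 2 := by linarith
    nlinarith [Real.one_le_rpow h hq0]
  · rcases eq_or_lt_of_le (abs_nonneg (a - b)) with h0 | h0
    · have hab : a = b := by
        have : |a - b| = 0 := h0.symm
        have := abs_eq_zero.mp this
        linarith
      simp [hab]
      positivity
    · have hle : |a - b| ≤ |a - b| ^ q := by
        calc |a - b| = |a - b| ^ (1:ℝ) := (Real.rpow_one _).symm
          _ ≤ |a - b| ^ q := Real.rpow_le_rpow_of_exponent_ge h0 h.le hq1
      nlinarith [Real.rpow_nonneg (abs_nonneg (a - b)) q]

/-- Hölder continuity of the family of functionals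
`l_ξ(u) = ∫₀^∞ sin(ξ y) √|V(y)| u(y) dy` on `L²((0,∞))`. -/
theorem l_xi_holder (V : ℝ → ℂ) (p : ℝ) (hp : 0 < p) (hp1 : p < 1)
    (hV : IntegrableOn V (Ioi 0))
    (hVp : IntegrableOn (fun y => y ^ p * ‖V y‖) (Ioi 0))
    (ξ η : ℝ)
    (Lξ Lη : Lp ℂ 2 (volume.restrict (Ioi (0:ℝ))) →L[ℂ] ℂ)
    (hLξ : ∀ u, Lξ u = ∫ y in Ioi (0:ℝ),
        ((Real.sin (ξ * y) * Real.sqrt ‖V y‖ : ℝ) : ℂ) * u y)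
    (hLη : ∀ u, Lη u = ∫ y in Ioi (0:ℝ),
        ((Real.sin (η * y) * Real.sqrt ‖V y‖ : ℝ) : ℂ) * u y) :
    ‖Lξ - Lη‖ ≤ 2 * |ξ - η| ^ (p / 2) *
      (∫ y in Ioi (0:ℝ), y ^ p * ‖V y‖) ^ ((1:ℝ) / 2) := by
  have hsqrtm : AEStronglyMeasurable (fun y => Real.sqrt ‖V y‖)
      (volume.restrict (Ioi (0:ℝ))) :=
    Real.continuous_sqrt.comp_aestronglyMeasurable hV.1.norm
  -- membership in L² of the kernels
  have mem : ∀ t : ℝ, MemLp (fun y => ((Real.sin (t*y) * Real.sqrt ‖V y‖ : ℝ) : ℂ)) 2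
      (volume.restrict (Ioi (0:ℝ))) := by
    intro t
    have hsm : AEStronglyMeasurable (fun y => ((Real.sin (t*y) * Real.sqrt ‖V y‖ : ℝ) : ℂ))
        (volume.restrict (Ioi (0:ℝ))) :=
      Complex.continuous_ofReal.comp_aestronglyMeasurable
        (((Real.continuous_sin.comp (continuous_const.mul continuous_id)).aestronglyMeasurable).mul
          hsqrtm)
    rw [memLp_two_iff_integrable_sq_norm hsm]
    refine hV.norm.mono (hsm.norm.pow 2) ?_
    filter_upwards with y
    have hb : ‖((Real.sin (t*y) * Real.sqrt ‖V y‖ : ℝ) : ℂ)‖^2 ≤ ‖V y‖ := by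
      rw [Complex.norm_real, Real.norm_eq_abs, sq_abs, mul_pow, Real.sq_sqrt (norm_nonneg _)]
      nlinarith [Real.sin_sq_le_one (t*y), norm_nonneg (V y)]
    calc ‖‖((Real.sin (t*y) * Real.sqrt ‖V y‖ : ℝ) : ℂ)‖^2‖
        = ‖((Real.sin (t*y) * Real.sqrt ‖V y‖ : ℝ) : ℂ)‖^2 := by
          rw [Real.norm_eq_abs, abs_of_nonneg (by positivity)]
      _ ≤ ‖V y‖ := hb
      _ = ‖‖V y‖‖ := (norm_norm _).symm
  set Fξ := (mem ξ).toLp _ with hFξ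
  set Fη := (mem η).toLp _ with hFη
  set G : ℝ → ℂ := fun y => (((Real.sin (ξ*y) - Real.sin (η*y)) * Real.sqrt ‖V y‖ : ℝ) : ℂ)
    with hG
  have hGeq : ((fun y => ((Real.sin (ξ*y) * Real.sqrt ‖V y‖ : ℝ) : ℂ))
      - fun y => ((Real.sin (η*y) * Real.sqrt ‖V y‖ : ℝ) : ℂ)) = G := by
    funext y; simp only [Pi.sub_apply, hG]; push_cast; ring
  have memG : MemLp G 2 (volume.restrict (Ioi (0:ℝ))) := hGeq ▸ (mem ξ).sub (mem η)
  have hGint : Integrable (fun y => ‖G y‖ ^ 2) (volume.restrict (Ioi (0:ℝ))) :=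
    (memLp_two_iff_integrable_sq_norm memG.1).mp memG
  -- the functional difference is the inner product against F
  have hip : ∀ (t : ℝ) (u : Lp ℂ 2 (volume.restrict (Ioi (0:ℝ)))),
      @inner ℂ _ _ ((mem t).toLp _) u
        = ∫ y in Ioi (0:ℝ), ((Real.sin (t*y) * Real.sqrt ‖V y‖ : ℝ) : ℂ) * u y := by
    intro t u
    rw [L2.inner_def]
    refine integral_congr_ae ?_
    filter_upwards [(mem t).coeFn_toLp] with y hy
    rw [RCLike.inner_apply, hy, Complex.conj_ofReal, mul_comm]
  have key : ∀ u : Lp ℂ 2 (volume.restrict (Ioi (0:ℝ))),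
      (Lξ - Lη) u = @inner ℂ _ _ (Fξ - Fη) u := by
    intro u
    rw [ContinuousLinearMap.sub_apply, hLξ u, hLη u, inner_sub_left, hip ξ u, hip η u]
  -- a.e. description of F
  have hcoe : ∀ᵐ y ∂(volume.restrict (Ioi (0:ℝ))), (Fξ - Fη) y = G y := by
    filter_upwards [Lp.coeFn_sub Fξ Fη, (mem ξ).coeFn_toLp, (mem η).coeFn_toLp] with y h1 h2 h3
    rw [h1, Pi.sub_apply, h2, h3, hG]
    push_cast; ring
  have hnormFsq : ‖Fξ - Fη‖ ^ 2 = ∫ y in Ioi (0:ℝ), ‖G y‖ ^ 2 := by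
    rw [@norm_sq_eq_re_inner ℂ, L2.inner_def, ← integral_re (L2.integrable_inner (Fξ - Fη) (Fξ - Fη))]
    refine integral_congr_ae ?_
    filter_upwards [hcoe] with y hy
    rw [RCLike.inner_apply, hy, RCLike.mul_conj]
    simp [← Complex.ofReal_pow]
  -- pointwise bound
  have hbd : ∀ᵐ y ∂(volume.restrict (Ioi (0:ℝ))),
      ‖G y‖ ^ 2 ≤ 4 * |ξ - η| ^ p * (y ^ p * ‖V y‖) := by
    filter_upwards [ae_restrict_mem measurableSet_Ioi] with y hy0
    rw [hG]
    simp only []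
    rw [Complex.norm_real, Real.norm_eq_abs, sq_abs]
    have hy0' : (0:ℝ) < y := hy0
    have hsin := sin_holder (ξ*y) (η*y) (p/2) (by positivity) (by linarith)
    have hd : |ξ*y - η*y| = |ξ - η| * y := by
      rw [← sub_mul, abs_mul, abs_of_pos hy0']
    rw [hd] at hsin
    have hrw : (2 * (|ξ - η| * y) ^ (p/2)) ^ 2 = 4 * |ξ - η| ^ p * y ^ p := by
      rw [mul_pow, ← Real.rpow_natCast ((|ξ - η| * y) ^ (p/2)) 2,
        ← Real.rpow_mul (by positivity)]
      rw [Real.mul_rpow (abs_nonneg _) hy0'.le]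
      norm_num; ring
    calc ((Real.sin (ξ*y) - Real.sin (η*y)) * Real.sqrt ‖V y‖) ^ 2
        = (Real.sin (ξ*y) - Real.sin (η*y)) ^ 2 * ‖V y‖ := by
          rw [mul_pow, Real.sq_sqrt (norm_nonneg _)]
      _ ≤ (2 * (|ξ - η| * y) ^ (p/2)) ^ 2 * ‖V y‖ := by
          have h1 : (Real.sin (ξ*y) - Real.sin (η*y)) ^ 2 ≤ (2 * (|ξ - η| * y) ^ (p/2)) ^ 2 := by
            rw [← sq_abs (Real.sin (ξ*y) - Real.sin (η*y))]
            have h0 : (0:ℝ) ≤ 2 * (|ξ - η| * y) ^ (p/2) := by positivity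
            nlinarith [abs_nonneg (Real.sin (ξ*y) - Real.sin (η*y))]
          exact mul_le_mul_of_nonneg_right h1 (norm_nonneg _)
      _ = 4 * |ξ - η| ^ p * (y ^ p * ‖V y‖) := by rw [hrw]; ring
  -- integrability of the dominating function
  have hdom : Integrable (fun y => 4 * |ξ - η| ^ p * (y ^ p * ‖V y‖))
      (volume.restrict (Ioi (0:ℝ))) := hVp.const_mul _
  have hIle : ∫ y in Ioi (0:ℝ), ‖G y‖ ^ 2
      ≤ 4 * |ξ - η| ^ p * ∫ y in Ioi (0:ℝ), y ^ p * ‖V y‖ := by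
    rw [← integral_const_mul]
    exact integral_mono_ae hGint hdom hbd
  have hInonneg : 0 ≤ ∫ y in Ioi (0:ℝ), y ^ p * ‖V y‖ := by
    refine setIntegral_nonneg measurableSet_Ioi fun y hy => ?_
    have : (0:ℝ) < y := hy
    positivity
  -- bound on the norm of F
  have hnormF : ‖Fξ - Fη‖ ≤ 2 * |ξ - η| ^ (p / 2) *
      (∫ y in Ioi (0:ℝ), y ^ p * ‖V y‖) ^ ((1:ℝ)/2) := by
    have h1 : ‖Fξ - Fη‖ = Real.sqrt (‖Fξ - Fη‖ ^ 2) := (Real.sqrt_sq (norm_nonneg _)).symm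
    rw [h1, hnormFsq]
    refine (Real.sqrt_le_sqrt hIle).trans ?_
    rw [Real.sqrt_mul (by positivity), Real.sqrt_mul (by norm_num : (0:ℝ) ≤ 4)]
    rw [show Real.sqrt 4 = 2 by
      rw [show (4:ℝ) = 2^2 by norm_num, Real.sqrt_sq (by norm_num : (0:ℝ) ≤ 2)]]
    rw [Real.sqrt_eq_rpow, ← Real.rpow_mul (abs_nonneg _), Real.sqrt_eq_rpow,
      show p * (1/2 : ℝ) = p/2 by ring]
  -- conclude via the operator norm bound
  refine ContinuousLinearMap.opNorm_le_bound _ (by positivity) fun u => ?_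
  rw [key u]
  calc ‖@inner ℂ _ _ (Fξ - Fη) u‖ ≤ ‖Fξ - Fη‖ * ‖u‖ := norm_inner_le_norm _ _
    _ ≤ (2 * |ξ - η| ^ (p / 2) *
        (∫ y in Ioi (0:ℝ), y ^ p * ‖V y‖) ^ ((1:ℝ)/2)) * ‖u‖ :=
      mul_le_mul_of_nonneg_right hnormF (norm_nonneg u)
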